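/- Let Φ be an n×d real matrix and let s, l be disjoint index sets with δ_{|s|+|l|} < 1 (in particular Φ_lᵀΦ_l is invertible). Let P{Φ_l} = Φ_l(Φ_lᵀΦ_l)^{-1}Φ_lᵀ denote the orthogonal projection onto the column span of Φ_l. Then for any a ∈ R^{|s|}, ‖P{Φ_l} Φ_s a‖₂ ≤ (δ_{|s|+|l|} / sqrt(1 − δ_{|l|})) ‖a‖₂. -/

import Mathlib

open Matrix Finset

noncomputable section

/-- Number of nonzero entries of a vector. -/
def sparsity {d : ℕ} (x : Fin d → ℝ) : ℕ :=
  (Finset.univ.filter fun i => x i ≠ 0).card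

/-- Squared Euclidean norm. -/
def nsq {k : Type*} [Fintype k] (v : k → ℝ) : ℝ := ∑ i, v i ^ 2

/-- Euclidean (ℓ₂) norm. -/
def l2 {k : Type*} [Fintype k] (v : k → ℝ) : ℝ := Real.sqrt (nsq v)

/-- `Φ` satisfies the order-`t` restricted isometry property with constant `δ`. -/
def satRIP {n d : ℕ} (Φ : Matrix (Fin n) (Fin d) ℝ) (t : ℕ) (δ : ℝ) : Prop :=
  ∀ x : Fin d → ℝ, sparsity x ≤ t →
    (1 - δ) * nsq x ≤ nsq (Φ.mulVec x) ∧ nsq (Φ.mulVec x) ≤ (1 + δ) * nsq x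

/-- The order-`t` RIP constant of `Φ` : the smallest `δ ≥ 0` satisfying the RIP bounds. -/
def ripConst {n d : ℕ} (Φ : Matrix (Fin n) (Fin d) ℝ) (t : ℕ) : ℝ :=
  sInf {δ : ℝ | 0 ≤ δ ∧ satRIP Φ t δ}

/-- The submatrix of `Φ` consisting of the columns indexed by `s`. -/
def cols {n d : ℕ} (Φ : Matrix (Fin n) (Fin d) ℝ) (s : Finset (Fin d)) :
    Matrix (Fin n) {i // i ∈ s} ℝ := Φ.submatrix id (fun i => (i : Fin d))

/-- Orthogonal projection `P{Φ_s} = Φ_s (Φ_sᵀ Φ_s)⁻¹ Φ_sᵀ` onto the column span of `Φ_s`. -/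
def proj {n d : ℕ} (Φ : Matrix (Fin n) (Fin d) ℝ) (s : Finset (Fin d)) :
    Matrix (Fin n) (Fin n) ℝ :=
  cols Φ s * ((cols Φ s)ᵀ * cols Φ s)⁻¹ * (cols Φ s)ᵀ

/-- Least-squares residual `v^{⊥s} = (I - P{Φ_s}) v`. -/
def residVec {n d : ℕ} (Φ : Matrix (Fin n) (Fin d) ℝ) (s : Finset (Fin d)) (y : Fin n → ℝ) :
    Fin n → ℝ := y - (proj Φ s).mulVec y

/-- The `i`-th column of `Φ`. -/
def col {n d : ℕ} (Φ : Matrix (Fin n) (Fin d) ℝ) (i : Fin d) : Fin n → ℝ := fun k => Φ k i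

/-- `x` is a least-squares estimate of `y` supported on `s`:
it is supported on `s` and minimizes `‖y - Φ z‖₂` over all `z` supported on `s`. -/
def leastSq {n d : ℕ} (Φ : Matrix (Fin n) (Fin d) ℝ) (y : Fin n → ℝ) (s : Finset (Fin d))
    (x : Fin d → ℝ) : Prop :=
  (∀ i, i ∉ s → x i = 0) ∧
  ∀ z : Fin d → ℝ, (∀ i, i ∉ s → z i = 0) → nsq (y - Φ.mulVec x) ≤ nsq (y - Φ.mulVec z)

/-- The support of a vector, as a `Finset`. -/
def spt {d : ℕ} (x : Fin d → ℝ) : Finset (Fin d) :=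
  Finset.univ.filter fun i => x i ≠ 0

/-! ### Auxiliary lemmas -/

lemma nsq_nonneg {k : Type*} [Fintype k] (v : k → ℝ) : 0 ≤ nsq v :=
  Finset.sum_nonneg fun _ _ => sq_nonneg _

lemma l2_nonneg {k : Type*} [Fintype k] (v : k → ℝ) : 0 ≤ l2 v := Real.sqrt_nonneg _

lemma l2_sq {k : Type*} [Fintype k] (v : k → ℝ) : l2 v ^ 2 = nsq v :=
  Real.sq_sqrt (nsq_nonneg v)

lemma nsq_eq_sum {k : Type*} [Fintype k] (v : k → ℝ) : nsq v = v ⬝ᵥ v := by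
  simp [nsq, dotProduct, sq]

lemma nsq_pos {k : Type*} [Fintype k] {v : k → ℝ} (h : v ≠ 0) : 0 < nsq v := by
  rcases (nsq_nonneg v).lt_or_eq with h1 | h1
  · exact h1
  · exfalso; apply h; funext i
    have := (Finset.sum_eq_zero_iff_of_nonneg (fun i _ => sq_nonneg (v i))).1 h1.symm i
      (Finset.mem_univ i)
    exact pow_eq_zero_iff (n := 2) (by norm_num) |>.1 this

lemma l2_pos {k : Type*} [Fintype k] {v : k → ℝ} (h : v ≠ 0) : 0 < l2 v :=
  Real.sqrt_pos.2 (nsq_pos h)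

lemma dot_mulVec_left {m k : Type*} [Fintype m] [Fintype k]
    (A : Matrix m k ℝ) (u : k → ℝ) (v : m → ℝ) :
    (A *ᵥ u) ⬝ᵥ v = u ⬝ᵥ (Aᵀ *ᵥ v) := by
  rw [Matrix.dotProduct_mulVec, Matrix.vecMul_transpose, dotProduct_comm,
    Matrix.dotProduct_mulVec]

lemma ripSet_nonempty {n d : ℕ} (Φ : Matrix (Fin n) (Fin d) ℝ) (t : ℕ) :
    {δ : ℝ | 0 ≤ δ ∧ satRIP Φ t δ}.Nonempty := by
  set C : ℝ := ∑ kk : Fin n, ∑ i : Fin d, Φ kk i ^ 2 with hC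
  have hC0 : 0 ≤ C := Finset.sum_nonneg fun _ _ => Finset.sum_nonneg fun _ _ => sq_nonneg _
  refine ⟨1 + C, by linarith, fun x _ => ?_⟩
  have hub : nsq (Φ.mulVec x) ≤ C * nsq x := by
    have : ∀ kk : Fin n, (Φ.mulVec x kk) ^ 2 ≤ (∑ i : Fin d, Φ kk i ^ 2) * nsq x := by
      intro kk
      simpa [Matrix.mulVec, dotProduct, nsq] using
        Finset.sum_mul_sq_le_sq_mul_sq Finset.univ (fun i => Φ kk i) x
    calc nsq (Φ.mulVec x) ≤ ∑ kk : Fin n, (∑ i : Fin d, Φ kk i ^ 2) * nsq x :=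
          Finset.sum_le_sum fun kk _ => this kk
      _ = C * nsq x := by rw [hC, ← Finset.sum_mul]
  constructor
  · have := nsq_nonneg (Φ.mulVec x); have := nsq_nonneg x; nlinarith
  · have := nsq_nonneg x; nlinarith

lemma ripSet_bddBelow {n d : ℕ} (Φ : Matrix (Fin n) (Fin d) ℝ) (t : ℕ) :
    BddBelow {δ : ℝ | 0 ≤ δ ∧ satRIP Φ t δ} := ⟨0, fun _ hδ => hδ.1⟩

lemma ripConst_nonneg {n d : ℕ} (Φ : Matrix (Fin n) (Fin d) ℝ) (t : ℕ) :
    0 ≤ ripConst Φ t :=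
  le_csInf (ripSet_nonempty Φ t) fun _ hδ => hδ.1

lemma ripSet_closed {n d : ℕ} (Φ : Matrix (Fin n) (Fin d) ℝ) (t : ℕ) :
    IsClosed {δ : ℝ | 0 ≤ δ ∧ satRIP Φ t δ} := by
  have : {δ : ℝ | 0 ≤ δ ∧ satRIP Φ t δ} =
      {δ : ℝ | 0 ≤ δ} ∩ ⋂ (x : Fin d → ℝ) (_ : sparsity x ≤ t),
        ({δ : ℝ | (1 - δ) * nsq x ≤ nsq (Φ.mulVec x)} ∩
         {δ : ℝ | nsq (Φ.mulVec x) ≤ (1 + δ) * nsq x}) := by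
    ext δ
    simp only [Set.mem_inter_iff, Set.mem_iInter, Set.mem_setOf_eq]
    constructor
    · rintro ⟨h0, h⟩; exact ⟨h0, fun x hx => h x hx⟩
    · rintro ⟨h0, h⟩; exact ⟨h0, fun x hx => h x hx⟩
  rw [this]
  refine isClosed_le continuous_const continuous_id |>.inter ?_
  refine isClosed_iInter fun x => isClosed_iInter fun _ => ?_
  exact (isClosed_le (by fun_prop) continuous_const).inter
    (isClosed_le continuous_const (by fun_prop))

lemma ripConst_mem {n d : ℕ} (Φ : Matrix (Fin n) (Fin d) ℝ) (t : ℕ) :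
    satRIP Φ t (ripConst Φ t) :=
  ((ripSet_closed Φ t).csInf_mem (ripSet_nonempty Φ t) (ripSet_bddBelow Φ t)).2

lemma ripConst_mono {n d : ℕ} (Φ : Matrix (Fin n) (Fin d) ℝ) {t₁ t₂ : ℕ} (h : t₁ ≤ t₂) :
    ripConst Φ t₁ ≤ ripConst Φ t₂ := by
  apply csInf_le_csInf (ripSet_bddBelow Φ t₁) (ripSet_nonempty Φ t₂)
  rintro δ ⟨h0, hs⟩
  exact ⟨h0, fun x hx => hs x (hx.trans h)⟩

/-! ### Extension of vectors supported on a finset -/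

def extV {d : ℕ} (s : Finset (Fin d)) (a : {i // i ∈ s} → ℝ) : Fin d → ℝ :=
  fun i => if h : i ∈ s then a ⟨i, h⟩ else 0

lemma spt_extV {d : ℕ} (s : Finset (Fin d)) (a : {i // i ∈ s} → ℝ) : spt (extV s a) ⊆ s := by
  intro i hi
  simp only [spt, mem_filter, mem_univ, true_and, extV] at hi
  by_contra h; simp [h] at hi

lemma sparsity_extV {d : ℕ} (s : Finset (Fin d)) (a : {i // i ∈ s} → ℝ) :
    sparsity (extV s a) ≤ s.card := Finset.card_le_card (spt_extV s a)

lemma sum_extV {d : ℕ} (s : Finset (Fin d)) (a : {i // i ∈ s} → ℝ) (f : Fin d → ℝ) :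
    ∑ i : Fin d, f i * extV s a i = ∑ j : {i // i ∈ s}, f j * a j := by
  rw [← Finset.sum_subset (Finset.subset_univ s) (fun i _ hi => by simp [extV, hi]),
    ← Finset.sum_coe_sort s (fun i => f i * extV s a i)]
  exact Finset.sum_congr rfl fun j _ => by simp [extV]

lemma mulVec_extV {n d : ℕ} (Φ : Matrix (Fin n) (Fin d) ℝ) (s : Finset (Fin d))
    (a : {i // i ∈ s} → ℝ) : Φ.mulVec (extV s a) = (cols Φ s).mulVec a := by
  funext k
  simpa only [Matrix.mulVec, dotProduct, cols, Matrix.submatrix_apply, id] using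
    sum_extV s a (fun i => Φ k i)

lemma nsq_extV {d : ℕ} (s : Finset (Fin d)) (a : {i // i ∈ s} → ℝ) :
    nsq (extV s a) = nsq a := by
  have := sum_extV s a (extV s a)
  simp only [nsq, sq]
  rw [this]
  exact Finset.sum_congr rfl fun j _ => by simp [extV]

lemma l2_extV {d : ℕ} (s : Finset (Fin d)) (a : {i // i ∈ s} → ℝ) :
    l2 (extV s a) = l2 a := by rw [l2, l2, nsq_extV]

/-! ### Cross inner-product bound -/

lemma sparsity_smul_le {d : ℕ} (c : ℝ) (x : Fin d → ℝ) :
    sparsity (c • x) ≤ sparsity x := by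
  apply Finset.card_le_card
  intro i hi
  simp only [mem_filter, mem_univ, true_and, Pi.smul_apply, smul_eq_mul] at hi ⊢
  exact fun h => hi (by simp [h])

lemma cross_weak {n d : ℕ} {Φ : Matrix (Fin n) (Fin d) ℝ} {t : ℕ} {δ : ℝ}
    (h : satRIP Φ t δ) (x y : Fin d → ℝ) (hd : ∀ i, x i = 0 ∨ y i = 0)
    (hs : sparsity x + sparsity y ≤ t) :
    (Φ *ᵥ x) ⬝ᵥ (Φ *ᵥ y) ≤ δ / 2 * (nsq x + nsq y) := by
  have hnadd : nsq (x + y) = nsq x + nsq y := by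
    simp only [nsq, ← Finset.sum_add_distrib]
    refine Finset.sum_congr rfl fun i _ => ?_
    rcases hd i with h1 | h1 <;> simp [h1]
  have hnsub : nsq (x - y) = nsq x + nsq y := by
    simp only [nsq, ← Finset.sum_add_distrib]
    refine Finset.sum_congr rfl fun i _ => ?_
    rcases hd i with h1 | h1 <;> simp [h1]
  have hsadd : sparsity (x + y) ≤ t := by
    refine le_trans (le_trans (Finset.card_le_card ?_) (Finset.card_union_le _ _)) hs
    intro i hi
    simp only [mem_filter, mem_univ, true_and, Finset.mem_union, Pi.add_apply] at hi ⊢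
    by_contra hc; push_neg at hc
    simp [hc.1, hc.2] at hi
  have hssub : sparsity (x - y) ≤ t := by
    refine le_trans (le_trans (Finset.card_le_card ?_) (Finset.card_union_le _ _)) hs
    intro i hi
    simp only [mem_filter, mem_univ, true_and, Finset.mem_union, Pi.sub_apply] at hi ⊢
    by_contra hc; push_neg at hc
    simp [hc.1, hc.2] at hi
  have key : nsq (Φ *ᵥ (x + y)) - nsq (Φ *ᵥ (x - y)) = 4 * ((Φ *ᵥ x) ⬝ᵥ (Φ *ᵥ y)) := by
    rw [Matrix.mulVec_add, Matrix.mulVec_sub]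
    simp only [nsq, dotProduct, ← Finset.sum_sub_distrib, Finset.mul_sum]
    refine Finset.sum_congr rfl fun k _ => ?_
    simp only [Pi.add_apply, Pi.sub_apply]; ring
  have h1 := (h (x + y) hsadd).2
  have h2 := (h (x - y) hssub).1
  rw [hnadd] at h1; rw [hnsub] at h2
  linarith

lemma cross {n d : ℕ} {Φ : Matrix (Fin n) (Fin d) ℝ} {t : ℕ} {δ : ℝ}
    (h : satRIP Φ t δ) (hδ0 : 0 ≤ δ) (x y : Fin d → ℝ) (hd : ∀ i, x i = 0 ∨ y i = 0)
    (hs : sparsity x + sparsity y ≤ t) :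
    (Φ *ᵥ x) ⬝ᵥ (Φ *ᵥ y) ≤ δ * (l2 x * l2 y) := by
  by_cases hx : x = 0
  · simp only [hx, Matrix.mulVec_zero, zero_dotProduct]
    exact mul_nonneg hδ0 (mul_nonneg (l2_nonneg _) (l2_nonneg _))
  by_cases hy : y = 0
  · simp only [hy, Matrix.mulVec_zero, dotProduct_zero]
    exact mul_nonneg hδ0 (mul_nonneg (l2_nonneg _) (l2_nonneg _))
  have hx2 := l2_pos hx
  have hy2 := l2_pos hy
  set c : ℝ := Real.sqrt (l2 y / l2 x) with hc
  set c' : ℝ := Real.sqrt (l2 x / l2 y) with hc'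
  have hcc : c * c' = 1 := by
    rw [hc, hc', ← Real.sqrt_mul (by positivity)]
    rw [div_mul_div_comm, mul_comm (l2 y)]
    rw [div_self (by positivity), Real.sqrt_one]
  have hc2 : c ^ 2 = l2 y / l2 x := Real.sq_sqrt (by positivity)
  have hc'2 : c' ^ 2 = l2 x / l2 y := Real.sq_sqrt (by positivity)
  have hnx : nsq (c • x) = l2 x * l2 y := by
    have : nsq (c • x) = c ^ 2 * nsq x := by
      simp [nsq, Finset.mul_sum]; exact Finset.sum_congr rfl fun i _ => by ring
    rw [this, ← l2_sq x, hc2]; field_simp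
  have hny : nsq (c' • y) = l2 x * l2 y := by
    have : nsq (c' • y) = c' ^ 2 * nsq y := by
      simp [nsq, Finset.mul_sum]; exact Finset.sum_congr rfl fun i _ => by ring
    rw [this, ← l2_sq y, hc'2]; field_simp
  have hd' : ∀ i, (c • x) i = 0 ∨ (c' • y) i = 0 := by
    intro i; rcases hd i with h1 | h1 <;> simp [h1]
  have hs' : sparsity (c • x) + sparsity (c' • y) ≤ t :=
    le_trans (add_le_add (sparsity_smul_le c x) (sparsity_smul_le c' y)) hs
  have := cross_weak h (c • x) (c' • y) hd' hs'
  rw [hnx, hny, Matrix.mulVec_smul, Matrix.mulVec_smul, smul_dotProduct,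
    dotProduct_smul, smul_eq_mul, smul_eq_mul, ← mul_assoc, hcc, one_mul] at this
  linarith

/-! ### Main theorem -/

/-- for disjoint `s, l` with `δ_{|s|+|l|} < 1`,
`‖P{Φ_l} Φ_s a‖₂ ≤ (δ_{|s|+|l|} / √(1 − δ_{|l|})) ‖a‖₂`. -/
theorem stmt2 {n d : ℕ} (Φ : Matrix (Fin n) (Fin d) ℝ) (s l : Finset (Fin d))
    (hdisj : Disjoint s l) (hδ : ripConst Φ (s.card + l.card) < 1)
    (a : {i // i ∈ s} → ℝ) :
    l2 ((proj Φ l).mulVec ((cols Φ s).mulVec a)) ≤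
      ripConst Φ (s.card + l.card) / Real.sqrt (1 - ripConst Φ l.card) * l2 a := by
  set t : ℕ := s.card + l.card with ht
  set δ : ℝ := ripConst Φ t with hδdef
  set δl : ℝ := ripConst Φ l.card with hδldef
  have hδ0 : 0 ≤ δ := ripConst_nonneg Φ t
  have hδl0 : 0 ≤ δl := ripConst_nonneg Φ l.card
  have hδlδ : δl ≤ δ := ripConst_mono Φ (Nat.le_add_left _ _)
  have hδl1 : δl < 1 := lt_of_le_of_lt hδlδ hδ
  have hr : (0:ℝ) < Real.sqrt (1 - δl) := Real.sqrt_pos.2 (by linarith)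
  set A : Matrix (Fin n) {i // i ∈ l} ℝ := cols Φ l with hA
  set B : Matrix (Fin n) {i // i ∈ s} ℝ := cols Φ s with hB
  set G : Matrix {i // i ∈ l} {i // i ∈ l} ℝ := Aᵀ * A with hG
  -- RIP lower bound for vectors supported on l
  have hlow : ∀ b : {i // i ∈ l} → ℝ, (1 - δl) * nsq b ≤ nsq (A *ᵥ b) := by
    intro b
    have := (ripConst_mem Φ l.card (extV l b) (sparsity_extV l b)).1
    rwa [mulVec_extV, nsq_extV] at this
  -- G is positive definite
  have hGpd : G.PosDef := by
    rw [Matrix.posDef_iff_dotProduct_mulVec]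
    constructor
    · show Gᴴ = G
      ext i j
      simp [hG, Matrix.mul_apply, mul_comm]
    · intro b hb
      have h1 : star b ⬝ᵥ (G *ᵥ b) = (A *ᵥ b) ⬝ᵥ (A *ᵥ b) := by
        rw [star_trivial, hG, ← Matrix.mulVec_mulVec, ← dot_mulVec_left]
      rw [h1, ← nsq_eq_sum]
      calc (0:ℝ) < (1 - δl) * nsq b := by
            have := nsq_pos hb; nlinarith
        _ ≤ nsq (A *ᵥ b) := hlow b
  have hGdet : IsUnit G.det := hGpd.det_pos.ne'.isUnit
  set w : Fin n → ℝ := B *ᵥ a with hw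
  set b : {i // i ∈ l} → ℝ := G⁻¹ *ᵥ (Aᵀ *ᵥ w) with hb
  set v : Fin n → ℝ := A *ᵥ b with hv
  have hproj : (proj Φ l) *ᵥ w = v := by
    rw [proj, hv, hb, ← hA, ← hG, ← Matrix.mulVec_mulVec, ← Matrix.mulVec_mulVec]
  rw [hproj]
  have hGb : G *ᵥ b = Aᵀ *ᵥ w := by
    rw [hb, Matrix.mulVec_mulVec, Matrix.mul_nonsing_inv G hGdet, Matrix.one_mulVec]
  -- key identity: nsq v = v ⬝ᵥ w
  have key1 : nsq v = v ⬝ᵥ w := by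
    rw [nsq_eq_sum]
    calc v ⬝ᵥ v = (A *ᵥ b) ⬝ᵥ v := by rw [hv]
      _ = b ⬝ᵥ (Aᵀ *ᵥ v) := dot_mulVec_left A b v
      _ = b ⬝ᵥ (G *ᵥ b) := by rw [hv, Matrix.mulVec_mulVec, ← hG]
      _ = b ⬝ᵥ (Aᵀ *ᵥ w) := by rw [hGb]
      _ = (A *ᵥ b) ⬝ᵥ w := (dot_mulVec_left A b w).symm
      _ = v ⬝ᵥ w := by rw [hv]
  -- cross bound
  have key2 : v ⬝ᵥ w ≤ δ * (l2 b * l2 a) := by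
    have hd' : ∀ i, extV l b i = 0 ∨ extV s a i = 0 := by
      intro i
      by_cases hi : i ∈ l
      · right
        have : i ∉ s := fun hs' => (Finset.disjoint_left.1 hdisj) hs' hi
        simp [extV, this]
      · left; simp [extV, hi]
    have hs' : sparsity (extV l b) + sparsity (extV s a) ≤ t := by
      rw [ht, add_comm s.card]
      exact add_le_add (sparsity_extV l b) (sparsity_extV s a)
    have := cross (ripConst_mem Φ t) hδ0 (extV l b) (extV s a) hd' hs'
    rwa [mulVec_extV, mulVec_extV, l2_extV, l2_extV, ← hA, ← hB, ← hv, ← hw] at this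
  -- lower bound on l2 v in terms of l2 b
  have key3 : Real.sqrt (1 - δl) * l2 b ≤ l2 v := by
    rw [l2, l2, ← Real.sqrt_mul (by linarith) (nsq b)]
    exact Real.sqrt_le_sqrt (hlow b)
  -- conclude
  rw [div_mul_eq_mul_div, le_div_iff₀ hr]
  rcases eq_or_lt_of_le (l2_nonneg v) with hv0 | hv0
  · rw [← hv0]
    have := mul_nonneg hδ0 (l2_nonneg a)
    simpa using this
  · have hnsqv : l2 v ^ 2 ≤ δ * (l2 b * l2 a) := by rw [l2_sq]; linarith [key1, key2]
    have hla := l2_nonneg a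
    have hlb := l2_nonneg b
    nlinarith [mul_le_mul_of_nonneg_left key3 (mul_nonneg hδ0 hla),
      mul_le_mul_of_nonneg_left hnsqv hr.le]

end
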